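/- Let α, β > 0 with α ≤ 2β, C₀ > 0, ε > 0, and set δ = 7ε/(16α). Let T be a natural number with T − 1 ≥ (8β/(3α))·ln 8, and let h : ℕ≥1 × {1,…,T} → ℝ be nonnegative and satisfy: h(1,1) ≤ C₀; h(s+1,1) = h(s,T) for all s ≥ 1; and for all s ≥ 1 and 1 ≤ t ≤ T−1, h(s,t+1) ≤ (1 − 3α/(8β))·h(s,t) + (α/(8β))·h(s,1) + (αC₀/(32β))·(1/2)^{s−1} + (α²/(4β))·δ. Then for every natural number S with S ≥ log₂(C₀/ε) + 2, one has h(S,1) ≤ ε. -/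

import Mathlib

set_option maxHeartbeats 1000000


/-- Epoch count for ε-accuracy in the proof of Theorem 2.1. -/
theorem stmt_13 (α β C₀ ε : ℝ) (hα : 0 < α) (hβ : 0 < β) (hαβ : α ≤ 2 * β)
    (hC₀ : 0 < C₀) (hε : 0 < ε)
    (δ : ℝ) (hδ : δ = 7 * ε / (16 * α))
    (T : ℕ) (hT : (8 * β / (3 * α)) * Real.log 8 ≤ (T : ℝ) - 1)
    (h : ℕ → ℕ → ℝ)
    (hpos : ∀ s t : ℕ, 1 ≤ s → 1 ≤ t → t ≤ T → 0 ≤ h s t)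
    (hinit : h 1 1 ≤ C₀)
    (hlink : ∀ s : ℕ, 1 ≤ s → h (s + 1) 1 = h s T)
    (hrec : ∀ s t : ℕ, 1 ≤ s → 1 ≤ t → t ≤ T - 1 →
      h s (t + 1) ≤ (1 - 3 * α / (8 * β)) * h s t + (α / (8 * β)) * h s 1
        + (α * C₀ / (32 * β)) * (1 / 2) ^ (s - 1) + (α ^ 2 / (4 * β)) * δ) :
    ∀ S : ℕ, 1 ≤ S → Real.logb 2 (C₀ / ε) + 2 ≤ (S : ℝ) → h S 1 ≤ ε := by
  have hδ0 : 0 < δ := by rw [hδ]; positivity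
  obtain ⟨r, hr_def⟩ : ∃ r : ℝ, r = 3 * α / (8 * β) := ⟨_, rfl⟩
  obtain ⟨γ, hγ_def⟩ : ∃ γ : ℝ, γ = 1 - r := ⟨_, rfl⟩
  have hr0 : 0 < r := by rw [hr_def]; positivity
  have hr34 : r ≤ 3 / 4 := by
    rw [hr_def, div_le_iff₀ (by positivity)]; nlinarith
  have hγ0 : 0 ≤ γ := by rw [hγ_def]; linarith
  have hγ1 : γ < 1 := by rw [hγ_def]; linarith
  have hlog8 : 0 < Real.log 8 := Real.log_pos (by norm_num)
  have hT2 : 2 ≤ T := by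
    have hpos' : (0:ℝ) < 8 * β / (3 * α) * Real.log 8 := by positivity
    have h1T : (1:ℝ) < (T:ℝ) := by linarith
    have : 1 < T := by exact_mod_cast h1T
    omega
  -- q := γ ^ (T-1) ≤ 1/8
  have hq18 : γ ^ (T - 1) ≤ 1 / 8 := by
    have h1 : γ ^ (T - 1) ≤ Real.exp (-r) ^ (T - 1) := by
      apply pow_le_pow_left₀ hγ0
      have := Real.add_one_le_exp (-r)
      rw [hγ_def]; linarith
    have h2 : Real.exp (-r) ^ (T - 1) = Real.exp (((T - 1 : ℕ) : ℝ) * (-r)) :=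
      (Real.exp_nat_mul _ _).symm
    have hcast : ((T - 1 : ℕ) : ℝ) = (T : ℝ) - 1 := by
      push_cast [Nat.cast_sub (by omega : 1 ≤ T)]; ring
    have h3 : Real.log 8 ≤ r * ((T : ℝ) - 1) := by
      have key : r * (8 * β / (3 * α) * Real.log 8) = Real.log 8 := by
        rw [hr_def]; field_simp
      calc Real.log 8 = r * (8 * β / (3 * α) * Real.log 8) := key.symm
        _ ≤ r * ((T : ℝ) - 1) := mul_le_mul_of_nonneg_left hT hr0.le
    have h4 : Real.exp (((T - 1 : ℕ) : ℝ) * (-r)) ≤ Real.exp (-Real.log 8) := by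
      apply Real.exp_le_exp.mpr
      rw [hcast]; nlinarith
    have h5 : Real.exp (-Real.log 8) = 1 / 8 := by
      rw [Real.exp_neg, Real.exp_log (by norm_num : (0:ℝ) < 8)]; norm_num
    calc γ ^ (T - 1) ≤ Real.exp (-r) ^ (T - 1) := h1
      _ = Real.exp (((T - 1 : ℕ) : ℝ) * (-r)) := h2
      _ ≤ 1 / 8 := h5 ▸ h4
  have hq0 : 0 ≤ γ ^ (T - 1) := pow_nonneg hγ0 _
  -- within-epoch bound
  have epoch : ∀ s : ℕ, 1 ≤ s → ∀ k : ℕ, k + 1 ≤ T →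
      h s (k + 1) ≤ γ ^ k * h s 1 + (1 - γ ^ k) *
        ((1/3) * h s 1 + (C₀ / 12) * (1/2) ^ (s - 1) + (2 * α / 3) * δ) := by
    intro s hs k
    induction k with
    | zero => intro _; simp
    | succ k ih =>
      intro hk
      obtain ⟨M, hM⟩ : ∃ M : ℝ, M = (1/3) * h s 1 + (C₀ / 12) * (1/2 : ℝ) ^ (s - 1)
          + (2 * α / 3) * δ := ⟨_, rfl⟩
      have hkT : k + 1 ≤ T - 1 := by omega
      have hrec' := hrec s (k + 1) hs (by omega) hkT
      have ih' : h s (k + 1) ≤ γ ^ k * h s 1 + (1 - γ ^ k) * M := by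
        rw [hM]; exact ih (by omega)
      have hB : (α / (8 * β)) * h s 1 + (α * C₀ / (32 * β)) * (1/2 : ℝ) ^ (s - 1)
          + (α ^ 2 / (4 * β)) * δ = r * M := by
        rw [hM, hr_def]; field_simp; ring
      have step : h s (k + 1 + 1) ≤ γ * h s (k + 1) + r * M := by
        rw [← hr_def, ← hγ_def] at hrec'
        linarith [hrec']
      have goalM : h s (k + 1 + 1) ≤ γ ^ (k + 1) * h s 1 + (1 - γ ^ (k + 1)) * M := by
        calc h s (k + 1 + 1) ≤ γ * h s (k + 1) + r * M := step
          _ ≤ γ * (γ ^ k * h s 1 + (1 - γ ^ k) * M) + r * M :=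
              add_le_add_left (mul_le_mul_of_nonneg_left ih' hγ0) _
          _ = γ ^ (k + 1) * h s 1 + (1 - γ ^ (k + 1)) * M := by
              have hrγ : r = 1 - γ := by rw [hγ_def]; ring
              rw [hrγ]; ring
      rw [hM] at goalM
      exact goalM
  -- main induction
  have main : ∀ s : ℕ, 1 ≤ s → h s 1 ≤ C₀ * (1/2 : ℝ) ^ (s - 1) + (8/7) * α * δ := by
    intro s hs
    induction s with
    | zero => omega
    | succ s ih =>
      rcases Nat.lt_or_ge s 1 with h1 | hs1
      · have : s = 0 := by omega
        subst this
        simp only [Nat.sub_self, pow_zero, mul_one]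
        have := mul_pos hα hδ0
        nlinarith
      · have ih' := ih hs1
        have hep := epoch s hs1 (T - 1) (by omega)
        have hTk : T - 1 + 1 = T := by omega
        rw [hTk] at hep
        rw [hlink s hs1]
        have hexp : (1/2 : ℝ) ^ (s + 1 - 1) = (1/2) * (1/2 : ℝ) ^ (s - 1) := by
          have hss : s + 1 - 1 = (s - 1) + 1 := by omega
          rw [hss, pow_succ]; ring
        rw [hexp]
        obtain ⟨q, hqd⟩ : ∃ q : ℝ, q = γ ^ (T - 1) := ⟨_, rfl⟩
        obtain ⟨P, hP⟩ : ∃ P : ℝ, P = (1/2 : ℝ) ^ (s - 1) := ⟨_, rfl⟩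
        rw [← hqd, ← hP] at hep
        rw [← hP] at ih' ⊢
        have hq18' : q ≤ 1/8 := by rw [hqd]; exact hq18
        have hq0' : 0 ≤ q := by rw [hqd]; exact hq0
        have hP0 : (0:ℝ) < P := by rw [hP]; positivity
        have hD0 : 0 < α * δ := mul_pos hα hδ0
        have t1 : 0 ≤ q * (C₀ * P + 8/7 * (α * δ) - h s 1) :=
          mul_nonneg hq0' (by nlinarith [ih'])
        have t2 : 0 ≤ (1/8 - q) * ((7/12) * (C₀ * P) + (2/21) * (α * δ)) :=
          mul_nonneg (by linarith) (by positivity)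
        linarith [hep, ih', t1, t2, mul_pos hC₀ hP0, hD0]
  -- conclusion
  intro S hS hSlog
  have hmain := main S hS
  have h8 : (8/7) * α * δ = ε / 2 := by
    rw [hδ]; field_simp; ring
  rw [h8] at hmain
  have hpow : C₀ * (1/2 : ℝ) ^ (S - 1) ≤ ε / 2 := by
    have hx : 0 < C₀ / ε := by positivity
    have h1 : Real.logb 2 (C₀ / ε) ≤ (S : ℝ) - 2 := by linarith
    have h2 : C₀ / ε ≤ (2 : ℝ) ^ ((S : ℝ) - 2) := by
      calc C₀ / ε = (2 : ℝ) ^ Real.logb 2 (C₀ / ε) :=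
            (Real.rpow_logb (by norm_num) (by norm_num) hx).symm
        _ ≤ (2 : ℝ) ^ ((S : ℝ) - 2) :=
            Real.rpow_le_rpow_of_exponent_le (by norm_num) h1
    have hcast : ((S - 1 : ℕ) : ℝ) = (S : ℝ) - 1 := by
      push_cast [Nat.cast_sub hS]; ring
    have h3 : ((1:ℝ)/2) ^ (S - 1) = (2 : ℝ) ^ (-((S : ℝ) - 1)) := by
      rw [one_div, inv_pow, Real.rpow_neg (by norm_num : (0:ℝ) ≤ 2), ← hcast,
        Real.rpow_natCast]
    rw [h3]
    have hC : C₀ ≤ ε * (2 : ℝ) ^ ((S : ℝ) - 2) := by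
      rw [div_le_iff₀ hε] at h2; linarith
    calc C₀ * (2 : ℝ) ^ (-((S : ℝ) - 1))
        ≤ (ε * (2 : ℝ) ^ ((S : ℝ) - 2)) * (2 : ℝ) ^ (-((S : ℝ) - 1)) :=
          mul_le_mul_of_nonneg_right hC (Real.rpow_nonneg (by norm_num) _)
      _ = ε * (2 : ℝ) ^ (((S : ℝ) - 2) + -((S : ℝ) - 1)) := by
          rw [mul_assoc, ← Real.rpow_add (by norm_num : (0:ℝ) < 2)]
      _ = ε * (2 : ℝ) ^ (-1 : ℝ) := by norm_num
      _ = ε / 2 := by rw [Real.rpow_neg_one]; ring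
  linarith
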